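/- Let m ≥ 1 and T ∈ B(X) satisfy (GFS)_m. Then for each 1 ≤ k ≤ m and all r > 1, x ∈ X, x* ∈ X*: ∫₀^{2π}|⟨R(re^{it},T)^{k+1}x,x*⟩|dt ≤ (Cm/k)/((r+1)(r−1)^k) ‖x‖‖x*‖. In particular (GFS)_m implies (GFS)_k for all 1 ≤ k ≤ m. -/

import Mathlib

set_option linter.unusedSectionVars false
set_option maxHeartbeats 1000000

open Complex MeasureTheory Metric
open scoped Real

namespace GFSaux

open Filter Bornology

variable {X : Type*} [NormedAddCommGroup X] [NormedSpace ℂ X] [CompleteSpace X]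

lemma norm_circ (s t : ℝ) : ‖(s:ℂ) * exp ((t:ℂ) * I)‖ = |s| := by
  rw [norm_mul]
  simp [Complex.norm_exp_ofReal_mul_I]

lemma mem_rho (T : X →L[ℂ] X) (hσ : spectrum ℂ T ⊆ closedBall 0 1) {z : ℂ} (hz : 1 < ‖z‖) :
    z ∈ resolventSet ℂ T := by
  rw [spectrum.mem_resolventSet_iff, ← spectrum.notMem_iff]
  intro h
  have := hσ h
  rw [mem_closedBall_zero_iff] at this
  linarith

lemma mem_rho' (T : X →L[ℂ] X) (hσ : spectrum ℂ T ⊆ closedBall 0 1) {s : ℝ} (hs : 1 < s)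
    (t : ℝ) : (s:ℂ) * exp ((t:ℂ) * I) ∈ resolventSet ℂ T := by
  refine mem_rho T hσ ?_
  rw [norm_circ]
  rw [abs_of_pos (by linarith)]
  exact hs

lemma hasDerivAt_resolvent_pow (T : X →L[ℂ] X) (n : ℕ) {z : ℂ} (hz : z ∈ resolventSet ℂ T) :
    HasDerivAt (fun w => resolvent T w ^ n) ((-(n:ℂ)) • resolvent T z ^ (n+1)) z := by
  induction n with
  | zero => simpa using hasDerivAt_const z (1 : X →L[ℂ] X)
  | succ n ih =>
    have h : HasDerivAt (fun w : ℂ => resolvent T w ^ n * resolvent T w) _ z := ih.mul (spectrum.hasDerivAt_resolvent (𝕜 := ℂ) (A := X →L[ℂ] X) hz)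
    have he : (fun w : ℂ => resolvent T w ^ n * resolvent T w)
        = fun w => resolvent T w ^ (n+1) := by
      ext w; rw [← pow_succ]
    rw [he] at h
    convert h using 1
    set r := resolvent T z
    rw [sq] at *
    calc (-(↑(n+1) : ℂ)) • r ^ (n + 1 + 1)
        = (-(n:ℂ)) • (r^(n+1) * r) + (-1 : ℂ) • (r^n * (r * r)) := by
          rw [← pow_succ, ← mul_assoc, ← pow_succ, ← pow_succ]
          push_cast; module
      _ = ((-(n:ℂ)) • r ^ (n + 1)) * r + r ^ n * -(r * r) := by
          rw [smul_mul_assoc]; simp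

lemma hasDerivAt_radial (T : X →L[ℂ] X) (hσ : spectrum ℂ T ⊆ closedBall 0 1)
    (n : ℕ) (x : X) (x' : StrongDual ℂ X)
    (t : ℝ) {s : ℝ} (hs : 1 < s) :
    HasDerivAt (fun u : ℝ => x' ((resolvent T ((u:ℂ) * exp ((t:ℂ) * I)) ^ n) x))
      (exp ((t:ℂ) * I) * ((-(n:ℂ)) * x' ((resolvent T ((s:ℂ) * exp ((t:ℂ) * I)) ^ (n+1)) x))) s := by
  have hmem := mem_rho' T hσ hs t
  have hpow := hasDerivAt_resolvent_pow T n hmem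
  have hline : HasDerivAt (fun u : ℝ => (u:ℂ) * exp ((t:ℂ) * I)) (exp ((t:ℂ) * I)) s := by
    simpa using (Complex.ofRealCLM.hasDerivAt (x := s)).mul_const (exp ((t:ℂ) * I))
  have hg : HasDerivAt (fun w : ℂ => x' ((resolvent T w ^ n) x))
      (x' ((((-(n:ℂ)) • resolvent T ((s:ℂ) * exp ((t:ℂ) * I)) ^ (n+1))) x))
      ((s:ℂ) * exp ((t:ℂ) * I)) := by
    have := (x'.comp (ContinuousLinearMap.apply ℂ X x)).hasFDerivAt.comp_hasDerivAt _ hpow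
    exact this
  have h2 := hg.scomp s hline
  simpa [Function.comp_def, smul_eq_mul, _root_.map_smul] using h2

lemma contAt (T : X →L[ℂ] X) (hσ : spectrum ℂ T ⊆ closedBall 0 1)
    (n : ℕ) (x : X) (x' : StrongDual ℂ X) {p : ℝ × ℝ} (hp : 1 < p.2) :
    ContinuousAt (fun q : ℝ × ℝ => x' ((resolvent T ((q.2:ℂ) * exp ((q.1:ℂ) * I)) ^ n) x)) p := by
  have hc1 : Continuous fun q : ℝ × ℝ => (q.2:ℂ) * exp ((q.1:ℂ) * I) := by
    fun_prop
  have hmem := mem_rho' T hσ hp p.1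
  have h2 : ContinuousAt (resolvent T) ((p.2:ℂ) * exp ((p.1:ℂ) * I)) :=
    (spectrum.hasDerivAt_resolvent (𝕜 := ℂ) (A := X →L[ℂ] X) hmem).continuousAt
  have hA : ContinuousAt (fun q : ℝ × ℝ => resolvent T ((q.2:ℂ) * exp ((q.1:ℂ) * I))) p := by
    have := ContinuousAt.comp (g := resolvent T)
      (f := fun q : ℝ × ℝ => (q.2:ℂ) * exp ((q.1:ℂ) * I)) h2 hc1.continuousAt
    simpa [Function.comp_def] using this
  have hB := hA.pow n
  exact ((x'.continuous.comp (ContinuousLinearMap.apply ℂ X x).continuous).continuousAt).comp hB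

lemma contAt1 (T : X →L[ℂ] X) (hσ : spectrum ℂ T ⊆ closedBall 0 1)
    (n : ℕ) (x : X) (x' : StrongDual ℂ X) {s : ℝ} (hs : 1 < s) :
    Continuous (fun t : ℝ => x' ((resolvent T ((s:ℂ) * exp ((t:ℂ) * I)) ^ n) x)) := by
  rw [continuous_iff_continuousAt]
  intro t
  have := ContinuousAt.comp (x := t)
    (g := fun q : ℝ × ℝ => x' ((resolvent T ((q.2:ℂ) * exp ((q.1:ℂ) * I)) ^ n) x))
    (f := fun u : ℝ => ((u, s) : ℝ × ℝ)) (contAt T hσ n x x' (p := (t, s)) hs)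
    ((continuous_id.prodMk continuous_const).continuousAt)
  simpa [Function.comp_def] using this


lemma contAt2 (T : X →L[ℂ] X) (hσ : spectrum ℂ T ⊆ closedBall 0 1)
    (n : ℕ) (x : X) (x' : StrongDual ℂ X) (t : ℝ) {u : ℝ} (hu : 1 < u) :
    ContinuousAt (fun v : ℝ => x' ((resolvent T ((v:ℂ) * exp ((t:ℂ) * I)) ^ n) x)) u := by
  have := ContinuousAt.comp (x := u)
    (g := fun q : ℝ × ℝ => x' ((resolvent T ((q.2:ℂ) * exp ((q.1:ℂ) * I)) ^ n) x))
    (f := fun v : ℝ => ((t, v) : ℝ × ℝ)) (contAt T hσ n x x' (p := (t, u)) hu)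
    ((continuous_const.prodMk continuous_id).continuousAt)
  simpa [Function.comp_def] using this

lemma calculus_aux (j : ℕ) (hj : 1 ≤ j) {r R : ℝ} (hr : 1 < r) (hrR : r ≤ R)
    (E : ℝ) (hE : 0 ≤ E) :
    ∫ s in r..R, E / ((s+1)*(s-1)^(j+1)) ≤ E / (r+1) * (((r-1)^j)⁻¹ / j) := by
  have hjR : (0:ℝ) < j := by exact_mod_cast hj
  have hr1 : (0:ℝ) < r - 1 := by linarith
  have hr0 : (0:ℝ) < r + 1 := by linarith
  have hden : ∀ s ∈ Set.uIcc r R, (s+1)*(s-1)^(j+1) ≠ 0 := by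
    intro s hs
    rw [Set.uIcc_of_le hrR] at hs
    have h1 : (1:ℝ) < s := lt_of_lt_of_le hr hs.1
    exact ne_of_gt (mul_pos (by linarith) (pow_pos (by linarith) _))
  have hden2 : ∀ s ∈ Set.uIcc r R, (s-1)^(j+1) ≠ 0 := by
    intro s hs
    rw [Set.uIcc_of_le hrR] at hs
    have h1 : (1:ℝ) < s := lt_of_lt_of_le hr hs.1
    exact ne_of_gt (pow_pos (by linarith) _)
  have hcont1 : ContinuousOn (fun s : ℝ => E / ((s+1)*(s-1)^(j+1))) (Set.uIcc r R) :=
    ContinuousOn.div continuousOn_const (by fun_prop) hden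
  have hcont2 : ContinuousOn (fun s : ℝ => E / (r+1) * ((s-1)^(j+1))⁻¹) (Set.uIcc r R) :=
    ContinuousOn.mul continuousOn_const (ContinuousOn.inv₀ (by fun_prop) hden2)
  have hI1 : IntervalIntegrable (fun s : ℝ => E / ((s+1)*(s-1)^(j+1))) volume r R :=
    hcont1.intervalIntegrable
  have hI2 : IntervalIntegrable (fun s : ℝ => E / (r+1) * ((s-1)^(j+1))⁻¹) volume r R :=
    hcont2.intervalIntegrable
  have hmono : (∫ s in r..R, E / ((s+1)*(s-1)^(j+1)))
      ≤ ∫ s in r..R, E / (r+1) * ((s-1)^(j+1))⁻¹ := by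
    refine intervalIntegral.integral_mono_on hrR hI1 hI2 ?_
    intro s hs
    have h1 : (1:ℝ) < s := lt_of_lt_of_le hr hs.1
    have hs1 : (0:ℝ) < s - 1 := by linarith
    rw [div_mul_eq_div_div, ← div_eq_mul_inv]
    have hp : (0:ℝ) < (s-1)^(j+1) := pow_pos hs1 _
    gcongr
    linarith [hs.1]
  refine hmono.trans ?_
  rw [intervalIntegral.integral_const_mul]
  -- FTC for the power integral
  have hder : ∀ u ∈ Set.uIcc r R,
      HasDerivAt (fun v : ℝ => -(1/(j:ℝ)) * ((v-1)^j)⁻¹) (((u-1)^(j+1))⁻¹) u := by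
    intro u hu
    rw [Set.uIcc_of_le hrR] at hu
    have h1 : (1:ℝ) < u := lt_of_lt_of_le hr hu.1
    have hne : u - 1 ≠ 0 := by intro h; rw [sub_eq_zero] at h; linarith
    have hd1 : HasDerivAt (fun v : ℝ => v - 1) 1 u := (hasDerivAt_id u).sub_const 1
    have hd2 := hasDerivAt_zpow (-(j:ℤ)) (u-1) (Or.inl hne)
    have hd3 := (hd2.comp u hd1).const_mul (-(1/(j:ℝ)))
    have hfe : (fun v : ℝ => -(1/(j:ℝ)) * ((fun w : ℝ => w^(-(j:ℤ))) ∘ (fun v : ℝ => v - 1)) v)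
        = fun v : ℝ => -(1/(j:ℝ)) * ((v-1)^j)⁻¹ := by
      funext v
      simp [Function.comp_def, zpow_neg, zpow_natCast]
    rw [hfe] at hd3
    refine hd3.congr_deriv ?_
    have hz : (u-1)^(-(j:ℤ)-1) = ((u-1)^(j+1))⁻¹ := by
      rw [show (-(j:ℤ)-1) = -((j+1:ℕ):ℤ) by push_cast; ring, zpow_neg, zpow_natCast]
    rw [hz]
    push_cast
    field_simp
  have hintI : IntervalIntegrable (fun s : ℝ => ((s-1)^(j+1))⁻¹) volume r R :=
    (ContinuousOn.inv₀ (by fun_prop) hden2).intervalIntegrable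
  have hftc := intervalIntegral.integral_eq_sub_of_hasDerivAt hder hintI
  rw [hftc]
  have hR1 : (0:ℝ) < R - 1 := by linarith
  have hposR : (0:ℝ) < ((R-1)^j)⁻¹ := inv_pos.mpr (pow_pos hR1 _)
  have hkey : -(1/(j:ℝ)) * ((R-1)^j)⁻¹ - -(1/(j:ℝ)) * ((r-1)^j)⁻¹ ≤ ((r-1)^j)⁻¹ / j := by
    have h0 : 0 ≤ (1/(j:ℝ)) * ((R-1)^j)⁻¹ :=
      mul_nonneg (by positivity) hposR.le
    have he : ((r-1)^j)⁻¹ / (j:ℝ) = (1/(j:ℝ)) * ((r-1)^j)⁻¹ := by ring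
    linarith
  exact mul_le_mul_of_nonneg_left hkey (div_nonneg hE hr0.le)

lemma step (T : X →L[ℂ] X) (hσ : spectrum ℂ T ⊆ closedBall 0 1)
    (j : ℕ) (hj : 1 ≤ j) (D : ℝ) (hD : 0 ≤ D)
    (H : ∀ s : ℝ, 1 < s → ∀ (x : X) (x' : StrongDual ℂ X),
      ∫ t in (0:ℝ)..(2*π), ‖x' ((resolvent T ((s : ℂ) * exp (t * I)) ^ (j+2)) x)‖
        ≤ D / ((s+1)*(s-1)^(j+1)) * ‖x‖ * ‖x'‖)
    {r : ℝ} (hr : 1 < r) (x : X) (x' : StrongDual ℂ X) :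
    ∫ t in (0:ℝ)..(2*π), ‖x' ((resolvent T ((r : ℂ) * exp (t * I)) ^ (j+1)) x)‖
      ≤ (D * (j+1) / j) / ((r+1)*(r-1)^j) * ‖x‖ * ‖x'‖ := by
  have hπ : (0:ℝ) ≤ 2*π := by positivity
  have hjR : (0:ℝ) < j := by exact_mod_cast hj
  refine le_of_forall_pos_le_add ?_
  intro ε hε
  set P : ℝ := ‖x‖ * ‖x'‖ with hP
  have hP0 : 0 ≤ P := by positivity
  set δ : ℝ := min 1 (ε / (2*π*(P+1))) with hδdef
  have hδpos : 0 < δ := lt_min one_pos (div_pos hε (by positivity))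
  have hδ1 : δ ≤ 1 := min_le_left _ _
  -- find M such that ‖resolvent T z‖ < δ for ‖z‖ > M
  have htend := spectrum.resolvent_tendsto_cobounded (𝕜 := ℂ) (a := T)
  have hev := htend.eventually (Metric.ball_mem_nhds (0 : X →L[ℂ] X) hδpos)
  rw [Filter.atTop_basis_Ioi.cobounded_of_norm.eventually_iff] at hev
  obtain ⟨M, -, hM⟩ := hev
  set R := max (M+1) r with hRdef
  have hrR : r ≤ R := le_max_right _ _
  have hR1 : 1 < R := lt_of_lt_of_le hr hrR
  have hMR : M < R := lt_of_lt_of_le (lt_add_one M) (le_max_left _ _)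
  -- pointwise FTC inequality
  have hkey : ∀ t : ℝ, ‖x' ((resolvent T ((r:ℂ) * exp ((t:ℂ) * I)) ^ (j+1)) x)‖
      ≤ ‖x' ((resolvent T ((R:ℂ) * exp ((t:ℂ) * I)) ^ (j+1)) x)‖
        + (j+1) * ∫ s in r..R, ‖x' ((resolvent T ((s:ℂ) * exp ((t:ℂ) * I)) ^ (j+2)) x)‖ := by
    intro t
    set φ : ℝ → ℂ := fun u => x' ((resolvent T ((u:ℂ) * exp ((t:ℂ) * I)) ^ (j+1)) x) with hφ
    set ψ : ℝ → ℂ := fun u =>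
      exp ((t:ℂ) * I) * ((-((j:ℂ)+1)) * x' ((resolvent T ((u:ℂ) * exp ((t:ℂ) * I)) ^ (j+2)) x))
      with hψ
    have hderiv : ∀ u ∈ Set.uIcc r R, HasDerivAt φ (ψ u) u := by
      intro u hu
      rw [Set.uIcc_of_le hrR] at hu
      have hu1 : 1 < u := lt_of_lt_of_le hr hu.1
      have := hasDerivAt_radial T hσ (j+1) x x' t hu1
      simpa [hφ, hψ] using this
    have hψcont : ContinuousOn ψ (Set.uIcc r R) := by
      rw [Set.uIcc_of_le hrR]
      intro u hu
      have hu1 : 1 < u := lt_of_lt_of_le hr hu.1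
      exact (continuousAt_const.mul
        (continuousAt_const.mul (contAt2 T hσ (j+2) x x' t hu1))).continuousWithinAt
    have hψint : IntervalIntegrable ψ volume r R := hψcont.intervalIntegrable
    have hftc := intervalIntegral.integral_eq_sub_of_hasDerivAt hderiv hψint
    have heq : φ r = φ R - ∫ s in r..R, ψ s := by rw [hftc]; ring
    have h1 : ‖φ r‖ ≤ ‖φ R‖ + ‖∫ s in r..R, ψ s‖ := by
      rw [heq]; exact norm_sub_le _ _
    have h2 : ‖∫ s in r..R, ψ s‖ ≤ ∫ s in r..R, ‖ψ s‖ :=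
      intervalIntegral.norm_integral_le_integral_norm hrR
    have h3 : (∫ s in r..R, ‖ψ s‖)
        = ((j:ℝ)+1) * ∫ s in r..R, ‖x' ((resolvent T ((s:ℂ) * exp ((t:ℂ) * I)) ^ (j+2)) x)‖ := by
      rw [← intervalIntegral.integral_const_mul]
      apply intervalIntegral.integral_congr
      intro s _
      have he1 : ‖exp ((t:ℂ)*I)‖ = 1 := by
        rw [Complex.norm_exp_ofReal_mul_I]
      have he2 : ‖(-((j:ℂ)+1))‖ = (j:ℝ)+1 := by
        rw [norm_neg, show ((j:ℂ)+1) = ((j+1 : ℕ):ℂ) by push_cast; ring, Complex.norm_natCast]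
        push_cast; ring
      simp only [hψ, norm_mul, he1, he2, one_mul]
    calc ‖φ r‖ ≤ ‖φ R‖ + ∫ s in r..R, ‖ψ s‖ := by linarith
      _ = ‖φ R‖ + ((j:ℝ)+1) * ∫ s in r..R,
            ‖x' ((resolvent T ((s:ℂ) * exp ((t:ℂ) * I)) ^ (j+2)) x)‖ := by rw [h3]
  -- now integrate over t
  set f2 : ℝ × ℝ → ℝ :=
    fun p => ‖x' ((resolvent T ((p.2:ℂ) * exp ((p.1:ℂ) * I)) ^ (j+2)) x)‖ with hf2
  set FR : ℝ → ℝ :=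
    fun t => ‖x' ((resolvent T ((R:ℂ) * exp ((t:ℂ) * I)) ^ (j+1)) x)‖ with hFRdef
  have hIl : IntervalIntegrable
      (fun t : ℝ => ‖x' ((resolvent T ((r:ℂ) * exp ((t:ℂ) * I)) ^ (j+1)) x)‖) volume 0 (2*π) :=
    ((contAt1 T hσ (j+1) x x' hr).norm).intervalIntegrable _ _
  have hIR : IntervalIntegrable FR volume 0 (2*π) :=
    ((contAt1 T hσ (j+1) x x' hR1).norm).intervalIntegrable _ _
  have hf2c : ContinuousOn f2 (Set.Icc 0 (2*π) ×ˢ Set.Icc r R) := by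
    intro p hp
    exact ((contAt T hσ (j+2) x x' (lt_of_lt_of_le hr hp.2.1)).norm).continuousWithinAt
  have hf2i : IntegrableOn f2 (Set.Ioc 0 (2*π) ×ˢ Set.Ioc r R) :=
    (hf2c.integrableOn_compact (isCompact_Icc.prod isCompact_Icc)).mono_set
      (Set.prod_mono Set.Ioc_subset_Icc_self Set.Ioc_subset_Icc_self)
  set μ := volume.restrict (Set.Ioc (0:ℝ) (2*π)) with hμ
  set ν := volume.restrict (Set.Ioc r R) with hν
  have hprod : Integrable (Function.uncurry fun t s => f2 (t, s)) (μ.prod ν) := by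
    rw [hμ, hν, Measure.prod_restrict, ← Measure.volume_eq_prod]
    exact hf2i
  have hIc : IntervalIntegrable (fun t => ∫ s in r..R, f2 (t, s)) volume 0 (2*π) := by
    rw [intervalIntegrable_iff_integrableOn_Ioc_of_le hπ]
    have h := hprod.integral_prod_left
    have he : (fun t => ∫ s in r..R, f2 (t, s)) = fun t => ∫ s, f2 (t, s) ∂ν := by
      funext t; rw [intervalIntegral.integral_of_le hrR]
    rw [he]
    exact h
  have hmono : (∫ t in (0:ℝ)..(2*π), ‖x' ((resolvent T ((r:ℂ) * exp ((t:ℂ) * I)) ^ (j+1)) x)‖)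
      ≤ ∫ t in (0:ℝ)..(2*π), (FR t + ((j:ℝ)+1) * ∫ s in r..R, f2 (t, s)) :=
    intervalIntegral.integral_mono_on hπ hIl (hIR.add (hIc.const_mul _)) (fun t _ => hkey t)
  have hsplit : (∫ t in (0:ℝ)..(2*π), (FR t + ((j:ℝ)+1) * ∫ s in r..R, f2 (t, s)))
      = (∫ t in (0:ℝ)..(2*π), FR t)
        + ((j:ℝ)+1) * ∫ t in (0:ℝ)..(2*π), ∫ s in r..R, f2 (t, s) := by
    rw [intervalIntegral.integral_add hIR (hIc.const_mul _), intervalIntegral.integral_const_mul]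
  -- bound the boundary term by ε
  have hB : (∫ t in (0:ℝ)..(2*π), FR t) ≤ ε := by
    have hbound : ∀ t ∈ Set.Icc (0:ℝ) (2*π), FR t ≤ δ * P := by
      intro t _
      have hres : ‖resolvent T ((R:ℂ) * exp ((t:ℂ) * I))‖ < δ := by
        have hmem : ‖(R:ℂ) * exp ((t:ℂ) * I)‖ ∈ Set.Ioi M := by
          rw [norm_circ, abs_of_pos (by linarith)]
          exact hMR
        have := hM hmem
        rwa [dist_zero_right] at this
      have hpow : ‖(resolvent T ((R:ℂ) * exp ((t:ℂ) * I)))^(j+1)‖ ≤ δ := by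
        refine (norm_pow_le' _ (Nat.succ_pos j)).trans ?_
        refine (pow_le_pow_left₀ (norm_nonneg _) hres.le _).trans ?_
        calc δ^(j+1) ≤ δ^1 := pow_le_pow_of_le_one hδpos.le hδ1 (by omega)
          _ = δ := pow_one δ
      have h1 : FR t ≤ ‖x'‖ * (‖(resolvent T ((R:ℂ) * exp ((t:ℂ) * I)))^(j+1)‖ * ‖x‖) := by
        refine (x'.le_opNorm _).trans ?_
        exact mul_le_mul_of_nonneg_left (ContinuousLinearMap.le_opNorm _ _) (norm_nonneg _)
      have h2 : ‖x'‖ * (‖(resolvent T ((R:ℂ) * exp ((t:ℂ) * I)))^(j+1)‖ * ‖x‖) ≤ δ * P := by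
        rw [hP]
        nlinarith [norm_nonneg x, norm_nonneg x', norm_nonneg
          ((resolvent T ((R:ℂ) * exp ((t:ℂ) * I)))^(j+1))]
      linarith
    have hc := intervalIntegral.integral_mono_on hπ hIR intervalIntegrable_const hbound
    rw [intervalIntegral.integral_const, smul_eq_mul] at hc
    have hδ2 : δ * (2*π*(P+1)) ≤ ε := by
      rw [← le_div_iff₀ (by positivity)]
      exact min_le_right _ _
    nlinarith [Real.pi_pos, mul_nonneg hδpos.le hP0]
  -- bound the double integral
  have hswap := MeasureTheory.integral_integral_swap (μ := μ) (ν := ν)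
      (f := fun t s => f2 (t, s)) hprod
  have hJ : (∫ t in (0:ℝ)..(2*π), ∫ s in r..R, f2 (t, s))
      ≤ D * P / (r+1) * (((r-1)^j)⁻¹ / j) := by
    have e1 : (∫ t in (0:ℝ)..(2*π), ∫ s in r..R, f2 (t, s))
        = ∫ t, (∫ s, f2 (t, s) ∂ν) ∂μ := by
      rw [intervalIntegral.integral_of_le hπ]
      simp_rw [intervalIntegral.integral_of_le hrR]
      rfl
    rw [e1, hswap]
    have hGint : IntegrableOn (fun s : ℝ => D * P / ((s+1)*(s-1)^(j+1))) (Set.Ioc r R) := by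
      refine (ContinuousOn.integrableOn_compact isCompact_Icc ?_).mono_set
        Set.Ioc_subset_Icc_self
      refine ContinuousOn.div continuousOn_const (by fun_prop) ?_
      intro s hs
      have h1 : (1:ℝ) < s := lt_of_lt_of_le hr hs.1
      exact ne_of_gt (mul_pos (by linarith) (pow_pos (by linarith) _))
    have hmono2 : (∫ s, (∫ t, f2 (t, s) ∂μ) ∂ν)
        ≤ ∫ s in Set.Ioc r R, D * P / ((s+1)*(s-1)^(j+1)) := by
      refine setIntegral_mono_on ?_ hGint measurableSet_Ioc ?_
      · exact hprod.integral_prod_right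
      · intro s hs
        have h1 : (1:ℝ) < s := lt_of_lt_of_le hr (le_of_lt hs.1)
        have hH := H s h1 x x'
        rw [intervalIntegral.integral_of_le hπ] at hH
        have he : (∫ t, f2 (t, s) ∂μ)
            = ∫ t in Set.Ioc (0:ℝ) (2*π), ‖x' ((resolvent T ((s:ℂ) * exp ((t:ℂ) * I)) ^ (j+2)) x)‖ := rfl
        rw [he]
        calc (∫ t in Set.Ioc (0:ℝ) (2*π), ‖x' ((resolvent T ((s:ℂ) * exp ((t:ℂ) * I)) ^ (j+2)) x)‖)
            ≤ D / ((s+1)*(s-1)^(j+1)) * ‖x‖ * ‖x'‖ := hH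
          _ = D * P / ((s+1)*(s-1)^(j+1)) := by rw [hP]; ring
    refine hmono2.trans ?_
    rw [← intervalIntegral.integral_of_le hrR]
    exact calculus_aux j hj hr hrR (D * P) (mul_nonneg hD hP0)
  -- put everything together
  have hfinal : ((j:ℝ)+1) * (D * P / (r+1) * (((r-1)^j)⁻¹ / j))
      = (D * ((j:ℝ)+1) / j) / ((r+1)*(r-1)^j) * ‖x‖ * ‖x'‖ := by
    rw [hP]
    have hne1 : (r:ℝ)+1 ≠ 0 := by positivity
    have hne2 : (r-1)^j ≠ 0 := ne_of_gt (pow_pos (by linarith) _)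
    have hne3 : (j:ℝ) ≠ 0 := ne_of_gt hjR
    field_simp
  have hstep2 : ((j:ℝ)+1) * (∫ t in (0:ℝ)..(2*π), ∫ s in r..R, f2 (t, s))
      ≤ ((j:ℝ)+1) * (D * P / (r+1) * (((r-1)^j)⁻¹ / j)) :=
    mul_le_mul_of_nonneg_left hJ (by positivity)
  calc (∫ t in (0:ℝ)..(2*π), ‖x' ((resolvent T ((r:ℂ) * exp ((t:ℂ) * I)) ^ (j+1)) x)‖)
      ≤ (∫ t in (0:ℝ)..(2*π), FR t)
        + ((j:ℝ)+1) * ∫ t in (0:ℝ)..(2*π), ∫ s in r..R, f2 (t, s) := by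
        rw [← hsplit]; exact hmono
    _ ≤ ε + ((j:ℝ)+1) * (D * P / (r+1) * (((r-1)^j)⁻¹ / j)) := by
        exact add_le_add hB hstep2
    _ = (D * ((j:ℝ)+1) / j) / ((r+1)*(r-1)^j) * ‖x‖ * ‖x'‖ + ε := by
        rw [hfinal]; ring

end GFSaux

/-- `(GFS)_m` implies, for every `1 ≤ k ≤ m`, the estimate
`∫₀^{2π}|⟨R(re^{it},T)^{k+1}x,x*⟩|dt ≤ (Cm/k)/((r+1)(r−1)^k)‖x‖‖x*‖`;
in particular `(GFS)_m` implies `(GFS)_k` for all `1 ≤ k ≤ m`. -/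
theorem stmt5 {X : Type*} [NormedAddCommGroup X] [NormedSpace ℂ X] [CompleteSpace X]
    (T : X →L[ℂ] X) (hσ : spectrum ℂ T ⊆ closedBall 0 1)
    (m : ℕ) (hm : 1 ≤ m) (C : ℝ) (hC : 0 < C)
    (hGFS : ∀ r : ℝ, 1 < r → ∀ (x : X) (x' : StrongDual ℂ X),
      ∫ t in (0:ℝ)..(2*π), ‖x' ((resolvent T ((r : ℂ) * exp (t * I)) ^ (m+1)) x)‖
        ≤ C / ((r+1)*(r-1)^m) * ‖x‖ * ‖x'‖) :
    ∀ k : ℕ, 1 ≤ k → k ≤ m → ∀ r : ℝ, 1 < r → ∀ (x : X) (x' : StrongDual ℂ X),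
      ∫ t in (0:ℝ)..(2*π), ‖x' ((resolvent T ((r : ℂ) * exp (t * I)) ^ (k+1)) x)‖
        ≤ (C * m / k) / ((r+1)*(r-1)^k) * ‖x‖ * ‖x'‖ := by
  suffices h : ∀ d k, 1 ≤ k → k + d = m → ∀ r : ℝ, 1 < r →
      ∀ (x : X) (x' : StrongDual ℂ X),
      ∫ t in (0:ℝ)..(2*π), ‖x' ((resolvent T ((r : ℂ) * exp (t * I)) ^ (k+1)) x)‖
        ≤ (C * m / k) / ((r+1)*(r-1)^k) * ‖x‖ * ‖x'‖ by
    intro k hk1 hkm r hr x x'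
    exact h (m - k) k hk1 (by omega) r hr x x'
  intro d
  induction d with
  | zero =>
    intro k hk1 hkm r hr x x'
    have hkm' : k = m := by omega
    subst hkm'
    have h := hGFS r hr x x'
    have hkne : (k:ℝ) ≠ 0 := by
      have : k ≠ 0 := by omega
      exact_mod_cast this
    have he : C * (k:ℝ) / k = C := by field_simp
    rw [he]
    exact h
  | succ d ih =>
    intro k hk1 hkm r hr x x'
    have hprev := ih (k+1) (by omega) (by omega)
    have hkne : (k:ℝ) ≠ 0 := by
      have : k ≠ 0 := by omega
      exact_mod_cast this
    have hstep := GFSaux.step T hσ k hk1 (C * m / ((k:ℝ)+1))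
      (by positivity) ?_ hr x x'
    · refine le_trans hstep (le_of_eq ?_)
      have hne1 : (r:ℝ)+1 ≠ 0 := by positivity
      have hne2 : (r-1)^k ≠ 0 := ne_of_gt (pow_pos (by linarith) _)
      field_simp
    · intro s hs x1 x1'
      have hp := hprev s hs x1 x1'
      rw [Nat.cast_add, Nat.cast_one] at hp
      exact hp
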